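/- For any two points x, x' ∈ ℝ^d, setting s = x' − x, y = ∇f(x') − ∇f(x), ŝ = H_*^{1/2}s, ŷ = H_*^{-1/2}y, σ = (M/μ^{3/2})‖H_*^{1/2}(x − x_*)‖, σ' = (M/μ^{3/2})‖H_*^{1/2}(x' − x_*)‖ and τ = max{σ, σ'}, if τ < 1 then (1 − τ)‖ŝ‖² ≤ ŝᵀŷ ≤ (1 + τ)‖ŝ‖² and (1 − τ)‖ŝ‖ ≤ ‖ŷ‖ ≤ (1 + τ)‖ŝ‖. -/

import Mathlib

noncomputable section

open Matrix Finset
open scoped RealInnerProductSpace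

abbrev E (d : ℕ) := EuclideanSpace ℝ (Fin d)
abbrev Mat (d : ℕ) := Matrix (Fin d) (Fin d) ℝ

/-- Spectral (operator 2-) norm of a real matrix. -/
def spec {d : ℕ} (A : Mat d) : ℝ := ‖Matrix.toEuclideanCLM (𝕜 := ℝ) A‖

/-- Frobenius norm of a real matrix. -/
def frob {d : ℕ} (A : Mat d) : ℝ := Real.sqrt (∑ i, ∑ j, (A i j) ^ 2)

/-- A matrix acting on a Euclidean vector. -/
def mApp {d : ℕ} (A : Mat d) (v : E d) : E d := Matrix.toEuclideanCLM (𝕜 := ℝ) A v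

/-- Outer product `u vᵀ`. -/
def outer {d : ℕ} (u v : E d) : Mat d := Matrix.of fun i j => u i * v j

/-- Euclidean dot product. -/
def dot {d : ℕ} (u v : E d) : ℝ := ∑ i, u i * v i

/-- `σ(x) = (M/μ^{3/2})·‖H_*^{1/2}(x − x_*)‖`. -/
def sig {d : ℕ} (M μ : ℝ) (sqH : Mat d) (xs x : E d) : ℝ :=
  M / μ ^ ((3:ℝ)/2) * ‖mApp sqH (x - xs)‖

/-- `τ = max{σ(x), σ(x')}`. -/
def tauP {d : ℕ} (M μ : ℝ) (sqH : Mat d) (xs x x' : E d) : ℝ :=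
  max (sig M μ sqH xs x) (sig M μ sqH xs x')

lemma dot_eq_inner {d : ℕ} (u v : E d) : dot u v = ⟪u, v⟫ := by
  simp [dot, PiLp.inner_apply]
  exact Finset.sum_congr rfl (fun i _ => mul_comm _ _)

lemma mApp_herm {d : ℕ} (A : Mat d) (hA : A.IsHermitian) (v w : E d) :
    ⟪v, mApp A w⟫ = ⟪mApp A v, w⟫ := by
  rw [mApp, mApp, ← ContinuousLinearMap.adjoint_inner_left, ← ContinuousLinearMap.star_eq_adjoint,
    ← map_star, Matrix.star_eq_conjTranspose, hA.eq]

set_option maxHeartbeats 1000000 in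
theorem weighted_secant_inner_and_norm_bounds
    {d : ℕ}
    (f : E d → ℝ) (g : E d → E d) (Hess : E d → Mat d) (xs : E d)
    (μ L M : ℝ) (hμ : 0 < μ) (hμL : μ ≤ L) (hM : 0 < M)
    -- `g` is the gradient of `f`, and `Hess` its Hessian (so `f` is twice differentiable)
    (hg : ∀ x, HasGradientAt f (g x) x)
    (hHd : ∀ x, HasFDerivAt g (Matrix.toEuclideanCLM (𝕜 := ℝ) (Hess x)) x)
    -- `xs` is the unique minimizer of `f`
    (hmin : ∀ x, f xs ≤ f x)
    (huniq : ∀ x, (∀ y, f x ≤ f y) → x = xs)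
    -- Assumption 1: strong convexity and gradient Lipschitz continuity
    (hgl : ∀ x y, μ * ‖x - y‖ ≤ ‖g x - g y‖)
    (hgu : ∀ x y, ‖g x - g y‖ ≤ L * ‖x - y‖)
    (hHl : ∀ x v, μ * ‖v‖ ^ 2 ≤ dot v (mApp (Hess x) v))
    (hHu : ∀ x v, dot v (mApp (Hess x) v) ≤ L * ‖v‖ ^ 2)
    -- Assumption 2: Hessian Lipschitz continuity toward the optimum
    (hLip : ∀ x, spec (Hess x - Hess xs) ≤ M * ‖x - xs‖)
    -- `sqH` is the positive definite square root `H_*^{1/2}` of `H_* = ∇²f(x_*)`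
    (sqH : Mat d) (hsqH : sqH.PosDef) (hsqH2 : sqH * sqH = Hess xs)
    (x x' : E d)
    (hτ : tauP M μ sqH xs x x' < 1) :
    (1 - tauP M μ sqH xs x x') * ‖mApp sqH (x' - x)‖ ^ 2 ≤
        dot (mApp sqH (x' - x)) (mApp sqH⁻¹ (g x' - g x)) ∧
    dot (mApp sqH (x' - x)) (mApp sqH⁻¹ (g x' - g x)) ≤
        (1 + tauP M μ sqH xs x x') * ‖mApp sqH (x' - x)‖ ^ 2 ∧
    (1 - tauP M μ sqH xs x x') * ‖mApp sqH (x' - x)‖ ≤ ‖mApp sqH⁻¹ (g x' - g x)‖ ∧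
    ‖mApp sqH⁻¹ (g x' - g x)‖ ≤ (1 + tauP M μ sqH xs x x') * ‖mApp sqH (x' - x)‖ := by
  classical
  set τ := tauP M μ sqH xs x x' with hτdef
  have hdet : IsUnit sqH.det := isUnit_iff_ne_zero.2 hsqH.det_pos.ne'
  have hinv : sqH⁻¹ * sqH = 1 := Matrix.nonsing_inv_mul _ hdet
  have hinv' : sqH * sqH⁻¹ = 1 := Matrix.mul_nonsing_inv _ hdet
  have hcanc : ∀ v : E d, mApp sqH⁻¹ (mApp sqH v) = v := by
    intro v
    rw [mApp, mApp, ← ContinuousLinearMap.mul_apply, ← _root_.map_mul, hinv, _root_.map_one,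
      ContinuousLinearMap.one_apply]
  have hcanc' : ∀ v : E d, mApp sqH (mApp sqH⁻¹ v) = v := by
    intro v
    rw [mApp, mApp, ← ContinuousLinearMap.mul_apply, ← _root_.map_mul, hinv', _root_.map_one,
      ContinuousLinearMap.one_apply]
  -- lower bound on sqH
  have hsq : (0:ℝ) < Real.sqrt μ := Real.sqrt_pos.2 hμ
  have hlow : ∀ v : E d, Real.sqrt μ * ‖v‖ ≤ ‖mApp sqH v‖ := by
    intro v
    have h1 : μ * ‖v‖ ^ 2 ≤ dot v (mApp (Hess xs) v) := hHl xs v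
    have h2 : dot v (mApp (Hess xs) v) = ‖mApp sqH v‖ ^ 2 := by
      rw [dot_eq_inner, ← hsqH2]
      have h3 : mApp (sqH * sqH) v = mApp sqH (mApp sqH v) := by
        rw [mApp, mApp, mApp, _root_.map_mul, ContinuousLinearMap.mul_apply]
      rw [h3, mApp_herm sqH hsqH.isHermitian, real_inner_self_eq_norm_sq]
    rw [h2] at h1
    nlinarith [Real.sq_sqrt hμ.le, norm_nonneg (mApp sqH v),
      mul_nonneg (Real.sqrt_nonneg μ) (norm_nonneg v)]
  -- the continuous linear map A = H^{-1/2}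
  set A : E d →L[ℝ] E d := Matrix.toEuclideanCLM (𝕜 := ℝ) sqH⁻¹ with hA
  have hAnorm : ‖A‖ ≤ (Real.sqrt μ)⁻¹ := by
    refine ContinuousLinearMap.opNorm_le_bound _ (by positivity) fun u => ?_
    have h := hlow (mApp sqH⁻¹ u)
    rw [hcanc'] at h
    rw [inv_mul_eq_div, le_div_iff₀ hsq]
    calc ‖A u‖ * Real.sqrt μ = Real.sqrt μ * ‖mApp sqH⁻¹ u‖ := by rw [mul_comm]; rfl
    _ ≤ ‖u‖ := h
  -- F and its derivative
  set F : E d → E d := fun w => mApp sqH⁻¹ (g (mApp sqH⁻¹ w)) - w with hF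
  set F' : E d → (E d →L[ℝ] E d) := fun w =>
    A ∘L (Matrix.toEuclideanCLM (𝕜 := ℝ) (Hess (mApp sqH⁻¹ w))) ∘L A
      - ContinuousLinearMap.id ℝ (E d) with hF'
  have hFd : ∀ w : E d, HasFDerivAt F (F' w) w := by
    intro w
    have h1 : HasFDerivAt (fun w : E d => mApp sqH⁻¹ (g (mApp sqH⁻¹ w)))
        (A ∘L (Matrix.toEuclideanCLM (𝕜 := ℝ) (Hess (mApp sqH⁻¹ w))) ∘L A) w :=
      A.hasFDerivAt.comp w ((hHd (mApp sqH⁻¹ w)).comp w A.hasFDerivAt)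
    exact h1.sub (hasFDerivAt_id w)
  -- key identity : A ∘ H* ∘ A = id
  have hAHA : A ∘L (Matrix.toEuclideanCLM (𝕜 := ℝ) (Hess xs)) ∘L A
      = ContinuousLinearMap.id ℝ (E d) := by
    have hm : sqH⁻¹ * Hess xs * sqH⁻¹ = 1 := by
      rw [← hsqH2, ← mul_assoc, mul_assoc sqH⁻¹ sqH sqH, ← mul_assoc sqH⁻¹ sqH, hinv, one_mul,
        hinv']
    have h := congrArg (Matrix.toEuclideanCLM (𝕜 := ℝ)) hm
    rw [_root_.map_mul, _root_.map_mul, _root_.map_one] at h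
    calc A ∘L (Matrix.toEuclideanCLM (𝕜 := ℝ) (Hess xs)) ∘L A
        = A * Matrix.toEuclideanCLM (𝕜 := ℝ) (Hess xs) * A := by rw [mul_assoc]; rfl
    _ = 1 := h
    _ = ContinuousLinearMap.id ℝ (E d) := rfl
  -- max of the two weighted distances
  set mx : ℝ := max ‖mApp sqH (x - xs)‖ ‖mApp sqH (x' - xs)‖ with hmx
  have hmx0 : 0 ≤ mx := le_trans (norm_nonneg _) (le_max_left _ _)
  have h32 : μ ^ ((3:ℝ)/2) = Real.sqrt μ ^ 3 := by
    rw [Real.sqrt_eq_rpow, ← Real.rpow_natCast (μ ^ ((1:ℝ)/2)) 3, ← Real.rpow_mul hμ.le]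
    norm_num
  have hCτ : M / Real.sqrt μ ^ 3 * mx ≤ τ := by
    rcases le_total ‖mApp sqH (x - xs)‖ ‖mApp sqH (x' - xs)‖ with h | h
    · rw [hmx, max_eq_right h]
      refine le_trans (le_of_eq ?_) (le_max_right _ _)
      rw [sig, h32]
    · rw [hmx, max_eq_left h]
      refine le_trans (le_of_eq ?_) (le_max_left _ _)
      rw [sig, h32]
  -- derivative norm bound on the segment
  set S : Set (E d) := segment ℝ (mApp sqH x) (mApp sqH x') with hS
  have hbound : ∀ w ∈ S, ‖F' w‖ ≤ τ := by
    intro w hw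
    obtain ⟨a, b, ha, hb, hab, hw⟩ := hw
    set z : E d := mApp sqH⁻¹ w with hz
    have hzseg : mApp sqH (z - xs) = a • mApp sqH (x - xs) + b • mApp sqH (x' - xs) := by
      have hzc : z = a • x + b • x' := by
        rw [hz, ← hw]
        have h4 : mApp sqH⁻¹ (a • mApp sqH x + b • mApp sqH x')
            = a • mApp sqH⁻¹ (mApp sqH x) + b • mApp sqH⁻¹ (mApp sqH x') := by
          simp only [mApp, _root_.map_add, _root_.map_smul]
        rw [h4, hcanc, hcanc]
      have hxz : a • x + b • x' - xs = a • (x - xs) + b • (x' - xs) := by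
        have h5 : a • (x - xs) + b • (x' - xs) = a • x + b • x' - (a + b) • xs := by
          rw [smul_sub, smul_sub, add_smul]; abel
        rw [h5, hab, one_smul]
      rw [hzc, hxz]
      simp only [mApp, _root_.map_add, _root_.map_smul]
    have hzmx : ‖mApp sqH (z - xs)‖ ≤ mx := by
      rw [hzseg]
      calc ‖a • mApp sqH (x - xs) + b • mApp sqH (x' - xs)‖
          ≤ a * ‖mApp sqH (x - xs)‖ + b * ‖mApp sqH (x' - xs)‖ := by
            refine le_trans (norm_add_le _ _) ?_
            rw [norm_smul, norm_smul, Real.norm_of_nonneg ha, Real.norm_of_nonneg hb]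
      _ ≤ a * mx + b * mx := by
            have := le_max_left ‖mApp sqH (x - xs)‖ ‖mApp sqH (x' - xs)‖
            have := le_max_right ‖mApp sqH (x - xs)‖ ‖mApp sqH (x' - xs)‖
            gcongr
      _ = mx := by rw [← add_mul, hab, one_mul]
    have hrw : F' w = A ∘L ((Matrix.toEuclideanCLM (𝕜 := ℝ) (Hess z - Hess xs)) ∘L A) := by
      rw [hF', _root_.map_sub, ContinuousLinearMap.sub_comp, ContinuousLinearMap.comp_sub, ← hAHA]
    rw [hrw]
    set D : E d →L[ℝ] E d := Matrix.toEuclideanCLM (𝕜 := ℝ) (Hess z - Hess xs) with hD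
    have hspec : ‖D‖ ≤ M * ‖z - xs‖ := hLip z
    have hzd : ‖z - xs‖ ≤ (Real.sqrt μ)⁻¹ * mx := by
      have h6 := hlow (z - xs)
      rw [inv_mul_eq_div, le_div_iff₀' hsq]
      exact le_trans h6 hzmx
    have hDb : ‖D‖ ≤ M * ((Real.sqrt μ)⁻¹ * mx) :=
      le_trans hspec (mul_le_mul_of_nonneg_left hzd hM.le)
    have step1 : ‖A ∘L (D ∘L A)‖ ≤ ‖A‖ * (‖D‖ * ‖A‖) :=
      le_trans (ContinuousLinearMap.opNorm_comp_le _ _)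
        (mul_le_mul_of_nonneg_left (ContinuousLinearMap.opNorm_comp_le _ _) (norm_nonneg _))
    have step2 : ‖A‖ * (‖D‖ * ‖A‖)
        ≤ (Real.sqrt μ)⁻¹ * ((M * ((Real.sqrt μ)⁻¹ * mx)) * (Real.sqrt μ)⁻¹) := by
      have hDnn : (0:ℝ) ≤ ‖D‖ := norm_nonneg _
      have hAnn : (0:ℝ) ≤ ‖A‖ := norm_nonneg _
      have hMnn : (0:ℝ) ≤ M * ((Real.sqrt μ)⁻¹ * mx) := by positivity
      exact mul_le_mul hAnorm (mul_le_mul hDb hAnorm hAnn hMnn)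
        (mul_nonneg hDnn hAnn) (by positivity)
    have step3 : (Real.sqrt μ)⁻¹ * ((M * ((Real.sqrt μ)⁻¹ * mx)) * (Real.sqrt μ)⁻¹)
        = M / Real.sqrt μ ^ 3 * mx := by
      field_simp
    calc ‖A ∘L (D ∘L A)‖ ≤ ‖A‖ * (‖D‖ * ‖A‖) := step1
    _ ≤ (Real.sqrt μ)⁻¹ * ((M * ((Real.sqrt μ)⁻¹ * mx)) * (Real.sqrt μ)⁻¹) := step2
    _ = M / Real.sqrt μ ^ 3 * mx := step3
    _ ≤ τ := hCτ
  -- mean value inequality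
  have hxS : mApp sqH x ∈ S := left_mem_segment ℝ _ _
  have hx'S : mApp sqH x' ∈ S := right_mem_segment ℝ _ _
  have hmv : ‖F (mApp sqH x') - F (mApp sqH x)‖ ≤ τ * ‖mApp sqH x' - mApp sqH x‖ :=
    Convex.norm_image_sub_le_of_norm_hasFDerivWithin_le
      (fun w hw => (hFd w).hasFDerivWithinAt) hbound (convex_segment _ _) hxS hx'S
  -- identify the F difference with ŷ − ŝ
  set sh : E d := mApp sqH (x' - x) with hsh
  set yh : E d := mApp sqH⁻¹ (g x' - g x) with hyh
  have hsub : mApp sqH x' - mApp sqH x = sh := by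
    rw [hsh, mApp, mApp, mApp, _root_.map_sub]
  have hFdiff : F (mApp sqH x') - F (mApp sqH x) = yh - sh := by
    rw [hF]
    simp only [hcanc]
    rw [hyh, ← hsub]
    have h7 : mApp sqH⁻¹ (g x' - g x) = mApp sqH⁻¹ (g x') - mApp sqH⁻¹ (g x) := by
      rw [mApp, mApp, mApp, _root_.map_sub]
    rw [h7]
    abel
  have key : ‖yh - sh‖ ≤ τ * ‖sh‖ := by
    rw [← hFdiff, ← hsub]; exact hmv
  -- final derivation
  have hdotinner : dot sh yh = ‖sh‖ ^ 2 + ⟪sh, yh - sh⟫ := by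
    rw [dot_eq_inner, ← real_inner_self_eq_norm_sq, ← inner_add_right, add_sub_cancel]
  have hcs : |⟪sh, yh - sh⟫| ≤ ‖sh‖ * (τ * ‖sh‖) :=
    le_trans (abs_real_inner_le_norm _ _)
      (mul_le_mul_of_nonneg_left key (norm_nonneg _))
  have habs := abs_le.1 hcs
  have hn1 : ‖yh‖ ≤ ‖sh‖ + τ * ‖sh‖ := by
    calc ‖yh‖ = ‖sh + (yh - sh)‖ := by rw [add_sub_cancel]
    _ ≤ ‖sh‖ + ‖yh - sh‖ := norm_add_le _ _
    _ ≤ ‖sh‖ + τ * ‖sh‖ := by linarith [key]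
  have hn2 : ‖sh‖ - τ * ‖sh‖ ≤ ‖yh‖ := by
    have h8 : ‖sh‖ ≤ ‖yh‖ + ‖yh - sh‖ := by
      calc ‖sh‖ = ‖yh - (yh - sh)‖ := by rw [sub_sub_cancel]
      _ ≤ ‖yh‖ + ‖yh - sh‖ := norm_sub_le _ _
    linarith [key]
  refine ⟨?_, ?_, ?_, ?_⟩
  · rw [hdotinner]; nlinarith [habs.1]
  · rw [hdotinner]; nlinarith [habs.2]
  · linarith [hn2]
  · linarith [hn1]
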